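/- Let f = x^A − λ y^B with A ∈ ℤ_+^s, B ∈ ℤ_+^r all entries nonzero, m = s + r ≥ 3. Then the complete list of facet normal vectors of NP(f), up to positive scaling, is: the unit vectors e_1,…,e_m together with the vectors v_{i,j} = B_j e_i + A_i e_{s+j} for 1 ≤ i ≤ s, 1 ≤ j ≤ r. In particular NP(f) has exactly m + sr facets when the v_{i,j} are pairwise non-proportional. -/

import Mathlib

open Submodule Set

namespace Stmt10Aux

variable {ι : Type*} [Fintype ι] [DecidableEq ι]

def coneSet (Z : Set ι) : Set (ι → ℝ) := {t | (∀ k, 0 ≤ t k) ∧ ∀ k, k ∉ Z → t k = 0}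

def singles (Z : Set ι) : Set (ι → ℝ) := (fun k => Pi.single k (1:ℝ)) '' Z

lemma mem_span_singles {Z : Set ι} {t : ι → ℝ} (ht : ∀ k, k ∉ Z → t k = 0) :
    t ∈ Submodule.span ℝ (singles Z) := by
  have h : t = ∑ k, Pi.single k (t k) := (Finset.univ_sum_single t).symm
  rw [h]
  refine Submodule.sum_mem _ fun k _ => ?_
  by_cases hk : k ∈ Z
  · have h2 : Pi.single k (t k) = t k • (Pi.single k 1 : ι → ℝ) := by
      funext k'; by_cases h' : k' = k <;> simp [Pi.single_apply, h']
    rw [h2]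
    exact Submodule.smul_mem _ _ (Submodule.subset_span ⟨k, hk, rfl⟩)
  · simp [ht k hk]

lemma single_mem_coneSet {Z : Set ι} {k : ι} (hk : k ∈ Z) :
    Pi.single k (1:ℝ) ∈ coneSet Z := by
  constructor
  · intro k'; rw [Pi.single_apply]; split <;> norm_num
  · intro k' hk'
    rw [Pi.single_apply, if_neg]
    rintro rfl; exact hk' hk

lemma zero_mem_coneSet (Z : Set ι) : (0 : ι → ℝ) ∈ coneSet Z :=
  ⟨fun _ => le_refl 0, fun _ _ => rfl⟩

lemma vectorSpan_translate_cone (p : ι → ℝ) (Z : Set ι) :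
    vectorSpan ℝ ((fun t => p + t) '' coneSet Z) = Submodule.span ℝ (singles Z) := by
  rw [vectorSpan_def]
  apply le_antisymm
  · rw [Submodule.span_le]
    rintro d ⟨w1, ⟨t1, ht1, rfl⟩, w2, ⟨t2, ht2, rfl⟩, rfl⟩
    show (p + t1) -ᵥ (p + t2) ∈ _
    have h : (p + t1) -ᵥ (p + t2) = t1 - t2 := by
      rw [vsub_eq_sub]; abel
    rw [h]
    exact sub_mem (mem_span_singles ht1.2) (mem_span_singles ht2.2)
  · rw [Submodule.span_le]
    rintro x ⟨k, hk, rfl⟩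
    apply Submodule.subset_span
    refine ⟨p + Pi.single k 1, ⟨_, single_mem_coneSet hk, rfl⟩,
      p + 0, ⟨_, zero_mem_coneSet Z, rfl⟩, ?_⟩
    show (p + Pi.single k 1) -ᵥ (p + 0) = _
    rw [vsub_eq_sub]; abel

lemma vectorSpan_segment_cone (p q : ι → ℝ) (Z : Set ι) :
    vectorSpan ℝ {w : ι → ℝ | ∃ a b : ℝ, 0 ≤ a ∧ 0 ≤ b ∧ a + b = 1 ∧
        ∃ t ∈ coneSet Z, w = a • p + b • q + t}
      = Submodule.span ℝ (insert (p - q) (singles Z)) := by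
  rw [vectorSpan_def]
  apply le_antisymm
  · rw [Submodule.span_le]
    rintro d ⟨w1, ⟨a1, b1, ha1, hb1, hab1, t1, ht1, rfl⟩,
      w2, ⟨a2, b2, ha2, hb2, hab2, t2, ht2, rfl⟩, rfl⟩
    have hb1' : b1 = 1 - a1 := by linarith
    have hb2' : b2 = 1 - a2 := by linarith
    subst hb1' hb2'
    show (a1 • p + (1 - a1) • q + t1) -ᵥ (a2 • p + (1 - a2) • q + t2) ∈ _
    have h : (a1 • p + (1 - a1) • q + t1) -ᵥ (a2 • p + (1 - a2) • q + t2)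
        = (a1 - a2) • (p - q) + (t1 - t2) := by
      rw [vsub_eq_sub]; module
    rw [h]
    exact add_mem (Submodule.smul_mem _ _ (Submodule.subset_span (Set.mem_insert _ _)))
      (Submodule.span_mono (Set.subset_insert _ _)
        (sub_mem (mem_span_singles ht1.2) (mem_span_singles ht2.2)))
  · rw [Submodule.span_le]
    rintro x (rfl | ⟨k, hk, rfl⟩)
    · apply Submodule.subset_span
      refine ⟨(1:ℝ) • p + (0:ℝ) • q + 0, ⟨1, 0, by norm_num, by norm_num, by norm_num,
        0, zero_mem_coneSet Z, rfl⟩,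
        (0:ℝ) • p + (1:ℝ) • q + 0, ⟨0, 1, by norm_num, by norm_num, by norm_num,
        0, zero_mem_coneSet Z, rfl⟩, ?_⟩
      show ((1:ℝ) • p + (0:ℝ) • q + 0) -ᵥ ((0:ℝ) • p + (1:ℝ) • q + 0) = _
      rw [vsub_eq_sub]; module
    · apply Submodule.subset_span
      refine ⟨(1:ℝ) • p + (0:ℝ) • q + Pi.single k 1, ⟨1, 0, by norm_num, by norm_num, by norm_num,
        _, single_mem_coneSet hk, rfl⟩,
        (1:ℝ) • p + (0:ℝ) • q + 0, ⟨1, 0, by norm_num, by norm_num, by norm_num,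
        0, zero_mem_coneSet Z, rfl⟩, ?_⟩
      show ((1:ℝ) • p + (0:ℝ) • q + Pi.single k 1) -ᵥ ((1:ℝ) • p + (0:ℝ) • q + 0) = _
      rw [vsub_eq_sub]; abel

lemma li_singles (Z : Set ι) : LinearIndependent ℝ ((↑) : singles Z → (ι → ℝ)) := by
  have h1 : LinearIndependent ℝ (fun k : ι => Pi.single k (1:ℝ)) := by
    have := (Pi.basisFun ℝ ι).linearIndependent
    have he : ⇑(Pi.basisFun ℝ ι) = fun k : ι => Pi.single k (1:ℝ) := by
      funext k; simp [Pi.basisFun_apply]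
    rwa [he] at this
  exact h1.linearIndepOn_id.mono (by rintro x ⟨k, _, rfl⟩; exact ⟨k, rfl⟩)

lemma single_one_injective :
    Function.Injective (fun k : ι => Pi.single k (1:ℝ)) := by
  intro a b h
  by_contra hne
  have := congrFun h a
  simp [Pi.single_apply, Ne.symm hne] at this

lemma ncard_singles (Z : Set ι) : (singles Z).ncard = Z.ncard :=
  Set.ncard_image_of_injective _ single_one_injective

lemma finrank_span_singles (Z : Set ι) :
    Module.finrank ℝ (Submodule.span ℝ (singles Z)) = Z.ncard := by
  haveI : Fintype (singles Z) := (Z.toFinite.image _).fintype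
  rw [finrank_span_set_eq_card (li_singles Z), ← Set.ncard_eq_toFinset_card', ncard_singles]

lemma not_mem_span_singles {Z : Set ι} {x : ι → ℝ} {k0 : ι} (hk0 : k0 ∉ Z) (hx : x k0 ≠ 0) :
    x ∉ Submodule.span ℝ (singles Z) := by
  intro hmem
  have hle : Submodule.span ℝ (singles Z) ≤
      LinearMap.ker (LinearMap.proj k0 : (ι → ℝ) →ₗ[ℝ] ℝ) := by
    rw [Submodule.span_le]
    rintro _ ⟨k, hk, rfl⟩
    have hne : k ≠ k0 := by rintro rfl; exact hk0 hk
    simp [LinearMap.mem_ker, Pi.single_apply, hne, Ne.symm hne]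
  exact hx (hle hmem)

lemma finrank_span_insert_singles (Z : Set ι) (x : ι → ℝ)
    (hx : x ∉ Submodule.span ℝ (singles Z)) :
    Module.finrank ℝ (Submodule.span ℝ (insert x (singles Z))) = Z.ncard + 1 := by
  haveI : Fintype (insert x (singles Z) : Set (ι → ℝ)) := ((Z.toFinite.image _).insert x).fintype
  have hxs : x ∉ singles Z := fun h => hx (Submodule.subset_span h)
  rw [finrank_span_set_eq_card (LinearIndepOn.id_insert (li_singles Z) hx), ← Set.ncard_eq_toFinset_card',
    Set.ncard_insert_of_notMem hxs (Z.toFinite.image _), ncard_singles]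

end Stmt10Aux

/-- For the pure binomial `f = x^A - λ y^B` (all entries of `A ∈ ℤ_+^s`,
`B ∈ ℤ_+^r` nonzero, `m = s + r ≥ 3`) with Newton polyhedron
`P = conv{(A,0),(0,B)} + ℝ_{≥0}^m`: a vector `v ∈ ℝ_{≥0}^m \ {0}` is a facet
normal of `P` (i.e. its minimizing face has dimension `m - 1`) iff, up to a
positive scaling, `v` is a unit vector `e_k` or one of the vectors
`v_{i,j} = B_j e_i + A_i e_{s+j}`.  In particular, if the `v_{i,j}` are pairwise
non-proportional, `P` has exactly `m + s·r` facets. -/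
theorem stmt10 {s r : ℕ} (hm : 3 ≤ s + r)
    (A : Fin s → ℕ) (B : Fin r → ℕ) (hA : ∀ i, 0 < A i) (hB : ∀ j, 0 < B j)
    (vA vB : Fin s ⊕ Fin r → ℝ)
    (hvA : vA = Sum.elim (fun i' => (A i' : ℝ)) (0 : Fin r → ℝ))
    (hvB : vB = Sum.elim (0 : Fin s → ℝ) (fun j' => (B j' : ℝ)))
    (vij : Fin s → Fin r → (Fin s ⊕ Fin r → ℝ))
    (hvij : ∀ i j, vij i j = Sum.elim (fun i' => if i' = i then (B j : ℝ) else 0)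
                          (fun j' => if j' = j then (A i : ℝ) else 0))
    (P : Set (Fin s ⊕ Fin r → ℝ))
    (hP : P = {w | ∃ u ∈ convexHull ℝ {vA, vB}, ∃ v : Fin s ⊕ Fin r → ℝ,
        (∀ k, 0 ≤ v k) ∧ w = u + v})
    (face : (Fin s ⊕ Fin r → ℝ) → Set (Fin s ⊕ Fin r → ℝ))
    (hface : ∀ v, face v = {w ∈ P | ∀ u ∈ P, ∑ k, v k * w k ≤ ∑ k, v k * u k}) :
    (∀ v : Fin s ⊕ Fin r → ℝ, (∀ k, 0 ≤ v k) → v ≠ 0 →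
      (Module.finrank ℝ (vectorSpan ℝ (face v)) = s + r - 1 ↔
        (∃ c : ℝ, 0 < c ∧ ∃ k, v = c • (Pi.single k 1 : Fin s ⊕ Fin r → ℝ)) ∨
        (∃ c : ℝ, 0 < c ∧ ∃ i j, v = c • vij i j))) ∧
    ((∀ i j i' j', (∃ c : ℝ, 0 < c ∧ vij i j = c • vij i' j') → i = i' ∧ j = j') →
      {F : Set (Fin s ⊕ Fin r → ℝ) | ∃ v : Fin s ⊕ Fin r → ℝ, (∀ k, 0 ≤ v k) ∧
        v ≠ 0 ∧ Module.finrank ℝ (vectorSpan ℝ (face v)) = s + r - 1 ∧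
        F = face v}.ncard = s + r + s * r) := by
  classical
  -- inner product helpers
  have ip_comb : ∀ (v w1 w2 t : Fin s ⊕ Fin r → ℝ) (a b : ℝ),
      ∑ k, v k * (a • w1 + b • w2 + t) k
        = a * (∑ k, v k * w1 k) + b * (∑ k, v k * w2 k) + ∑ k, v k * t k := by
    intro v w1 w2 t a b
    rw [Finset.mul_sum, Finset.mul_sum, ← Finset.sum_add_distrib, ← Finset.sum_add_distrib]
    refine Finset.sum_congr rfl fun k _ => ?_
    simp only [Pi.add_apply, Pi.smul_apply, smul_eq_mul]
    ring
  have ip_add : ∀ (v w t : Fin s ⊕ Fin r → ℝ),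
      ∑ k, v k * (w + t) k = (∑ k, v k * w k) + ∑ k, v k * t k := by
    intro v w t
    rw [← Finset.sum_add_distrib]
    exact Finset.sum_congr rfl fun k _ => by simp only [Pi.add_apply]; ring
  have ip_nonneg : ∀ v t : Fin s ⊕ Fin r → ℝ, (∀ k, 0 ≤ v k) → (∀ k, 0 ≤ t k) →
      0 ≤ ∑ k, v k * t k := fun v t hv ht =>
    Finset.sum_nonneg fun k _ => mul_nonneg (hv k) (ht k)
  have ip_cone : ∀ v t : Fin s ⊕ Fin r → ℝ, t ∈ Stmt10Aux.coneSet {k | v k = 0} →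
      ∑ k, v k * t k = 0 := by
    intro v t ht
    refine Finset.sum_eq_zero fun k _ => ?_
    by_cases h : v k = 0
    · rw [h, zero_mul]
    · rw [ht.2 k h, mul_zero]
  have ip_single : ∀ (v : Fin s ⊕ Fin r → ℝ) (k) (c : ℝ),
      ∑ kk, v kk * (Pi.single k c : Fin s ⊕ Fin r → ℝ) kk = v k * c := by
    intro v k c
    rw [Finset.sum_eq_single k]
    · simp
    · intro b _ hb; simp [Pi.single_apply, hb]
    · intro h; exact absurd (Finset.mem_univ k) h
  have ip_single' : ∀ (c : ℝ) (k) (w : Fin s ⊕ Fin r → ℝ),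
      ∑ kk, (c • (Pi.single k 1 : Fin s ⊕ Fin r → ℝ)) kk * w kk = c * w k := by
    intro c k w
    rw [Finset.sum_eq_single k]
    · simp
    · intro b _ hb; simp [Pi.single_apply, hb]
    · intro h; exact absurd (Finset.mem_univ k) h
  have cone_of_ip_zero : ∀ v t : Fin s ⊕ Fin r → ℝ, (∀ k, 0 ≤ v k) → (∀ k, 0 ≤ t k) →
      (∑ k, v k * t k) = 0 → ∀ k, v k ≠ 0 → t k = 0 := by
    intro v t hv ht hsum k hk
    have h := (Finset.sum_eq_zero_iff_of_nonneg
      (fun i _ => mul_nonneg (hv i) (ht i))).mp hsum k (Finset.mem_univ k)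
    rcases mul_eq_zero.mp h with h' | h'
    · exact absurd h' hk
    · exact h'
  -- membership in P
  have memP_iff : ∀ w : Fin s ⊕ Fin r → ℝ, w ∈ P ↔ ∃ a b : ℝ, 0 ≤ a ∧ 0 ≤ b ∧ a + b = 1 ∧
      ∃ t : Fin s ⊕ Fin r → ℝ, (∀ k, 0 ≤ t k) ∧ w = a • vA + b • vB + t := by
    intro w
    rw [hP]
    simp only [Set.mem_setOf_eq, convexHull_pair]
    constructor
    · rintro ⟨u, ⟨a, b, ha, hb, hab, rfl⟩, t, ht, rfl⟩
      exact ⟨a, b, ha, hb, hab, t, ht, rfl⟩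
    · rintro ⟨a, b, ha, hb, hab, t, ht, rfl⟩
      exact ⟨a • vA + b • vB, ⟨a, b, ha, hb, hab, rfl⟩, t, ht, rfl⟩
  have memP_iff' : ∀ w : Fin s ⊕ Fin r → ℝ, w ∈ P ↔ ∃ a b : ℝ, 0 ≤ a ∧ 0 ≤ b ∧ a + b = 1 ∧
      ∃ t : Fin s ⊕ Fin r → ℝ, (∀ k, 0 ≤ t k) ∧ w = a • vB + b • vA + t := by
    intro w
    rw [memP_iff]
    constructor
    · rintro ⟨a, b, ha, hb, hab, t, ht, rfl⟩
      exact ⟨b, a, hb, ha, by linarith, t, ht, by module⟩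
    · rintro ⟨a, b, ha, hb, hab, t, ht, rfl⟩
      exact ⟨b, a, hb, ha, by linarith, t, ht, by module⟩
  have hvAP : vA ∈ P := by
    rw [memP_iff]
    exact ⟨1, 0, zero_le_one, le_refl 0, by norm_num, 0, fun k => le_refl 0, by module⟩
  have hvBP : vB ∈ P := by
    rw [memP_iff]
    exact ⟨0, 1, le_refl 0, zero_le_one, by norm_num, 0, fun k => le_refl 0, by module⟩
  -- lower bound
  have hlb : ∀ v : Fin s ⊕ Fin r → ℝ, (∀ k, 0 ≤ v k) → ∀ w ∈ P,
      min (∑ k, v k * vA k) (∑ k, v k * vB k) ≤ ∑ k, v k * w k := by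
    intro v hv w hw
    rw [memP_iff] at hw
    obtain ⟨a, b, ha, hb, hab, t, ht, rfl⟩ := hw
    rw [ip_comb]
    have h1 := min_le_left (∑ k, v k * vA k) (∑ k, v k * vB k)
    have h2 := min_le_right (∑ k, v k * vA k) (∑ k, v k * vB k)
    have h3 := ip_nonneg v t hv ht
    have h4 := mul_le_mul_of_nonneg_left h1 ha
    have h5 := mul_le_mul_of_nonneg_left h2 hb
    have h6 : a * min (∑ k, v k * vA k) (∑ k, v k * vB k)
        + b * min (∑ k, v k * vA k) (∑ k, v k * vB k)
        = min (∑ k, v k * vA k) (∑ k, v k * vB k) := by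
      rw [← add_mul, hab, one_mul]
    linarith [h4, h5, h3, h6]
  have mem_face : ∀ v : Fin s ⊕ Fin r → ℝ, (∀ k, 0 ≤ v k) → ∀ w,
      (w ∈ face v ↔ w ∈ P ∧
        ∑ k, v k * w k = min (∑ k, v k * vA k) (∑ k, v k * vB k)) := by
    intro v hv w
    rw [hface]
    simp only [Set.mem_setOf_eq]
    constructor
    · rintro ⟨hwP, hmin⟩
      refine ⟨hwP, le_antisymm ?_ (hlb v hv w hwP)⟩
      rw [le_min_iff]
      exact ⟨hmin vA hvAP, hmin vB hvBP⟩
    · rintro ⟨hwP, heq⟩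
      exact ⟨hwP, fun u hu => heq ▸ hlb v hv u hu⟩
  -- face description: strict case
  have face_case : ∀ v : Fin s ⊕ Fin r → ℝ, (∀ k, 0 ≤ v k) → ∀ p q : Fin s ⊕ Fin r → ℝ,
      (∀ w : Fin s ⊕ Fin r → ℝ, w ∈ P ↔ ∃ a b : ℝ, 0 ≤ a ∧ 0 ≤ b ∧ a + b = 1 ∧
        ∃ t : Fin s ⊕ Fin r → ℝ, (∀ k, 0 ≤ t k) ∧ w = a • p + b • q + t) →
      (∑ k, v k * p k) < (∑ k, v k * q k) →
      min (∑ k, v k * vA k) (∑ k, v k * vB k) = ∑ k, v k * p k →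
      face v = (fun t => p + t) '' Stmt10Aux.coneSet {k | v k = 0} := by
    intro v hv p q hmem hlt hmineq
    ext w
    rw [mem_face v hv w, hmineq]
    constructor
    · rintro ⟨hwP, heq⟩
      rw [hmem] at hwP
      obtain ⟨a, b, ha, hb, hab, t, ht, rfl⟩ := hwP
      rw [ip_comb] at heq
      have hT := ip_nonneg v t hv ht
      have h1 : b * ((∑ k, v k * q k) - (∑ k, v k * p k)) + (∑ k, v k * t k) = 0 := by
        linear_combination heq - (∑ k, v k * p k) * hab
      have hb0 : b = 0 := by
        have hq : b * ((∑ k, v k * q k) - (∑ k, v k * p k)) = 0 := by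
          have := mul_nonneg hb (sub_nonneg.mpr hlt.le)
          linarith
        rcases mul_eq_zero.mp hq with h' | h'
        · exact h'
        · exfalso; have := sub_pos.mpr hlt; linarith
      have hT0 : (∑ k, v k * t k) = 0 := by rw [hb0] at h1; linarith
      have ha1 : a = 1 := by linarith
      refine ⟨t, ⟨ht, fun k hk => cone_of_ip_zero v t hv ht hT0 k hk⟩, ?_⟩
      rw [ha1, hb0]
      simp
    · rintro ⟨t, htc, rfl⟩
      constructor
      · rw [hmem]
        exact ⟨1, 0, zero_le_one, le_refl 0, by norm_num, t, htc.1, by module⟩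
      · have hval : ∑ k, v k * ((fun t => p + t) t) k
            = (∑ k, v k * p k) + ∑ k, v k * t k := ip_add v p t
        rw [hval, ip_cone v t htc, add_zero]
  -- face description: equality case
  have face_eq : ∀ v : Fin s ⊕ Fin r → ℝ, (∀ k, 0 ≤ v k) →
      (∑ k, v k * vA k) = (∑ k, v k * vB k) →
      face v = {w : Fin s ⊕ Fin r → ℝ | ∃ a b : ℝ, 0 ≤ a ∧ 0 ≤ b ∧ a + b = 1 ∧
        ∃ t ∈ Stmt10Aux.coneSet {k | v k = 0}, w = a • vA + b • vB + t} := by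
    intro v hv habAB
    have hmin : min (∑ k, v k * vA k) (∑ k, v k * vB k) = ∑ k, v k * vA k := by
      rw [habAB, min_self]
    ext w
    rw [mem_face v hv w, hmin]
    constructor
    · rintro ⟨hwP, heq⟩
      rw [memP_iff] at hwP
      obtain ⟨a, b, ha, hb, hab, t, ht, rfl⟩ := hwP
      rw [ip_comb] at heq
      have hT0 : (∑ k, v k * t k) = 0 := by
        linear_combination heq + b * habAB - (∑ k, v k * vA k) * hab
      exact ⟨a, b, ha, hb, hab, t,
        ⟨ht, fun k hk => cone_of_ip_zero v t hv ht hT0 k hk⟩, rfl⟩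
    · rintro ⟨a, b, ha, hb, hab, t, htc, rfl⟩
      refine ⟨(memP_iff _).mpr ⟨a, b, ha, hb, hab, t, htc.1, rfl⟩, ?_⟩
      rw [ip_comb, ip_cone v t htc, ← habAB]
      linear_combination (∑ k, v k * vA k) * hab
  -- sum splitting
  have ipA_eq : ∀ v : Fin s ⊕ Fin r → ℝ,
      ∑ k, v k * vA k = ∑ i, v (Sum.inl i) * (A i : ℝ) := by
    intro v
    rw [hvA, Fintype.sum_sum_type]
    simp
  have ipB_eq : ∀ v : Fin s ⊕ Fin r → ℝ,
      ∑ k, v k * vB k = ∑ j, v (Sum.inr j) * (B j : ℝ) := by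
    intro v
    rw [hvB, Fintype.sum_sum_type]
    simp
  -- sums against vij
  have hipA_vij : ∀ (c : ℝ) (i : Fin s) (j : Fin r),
      ∑ kk, (c • vij i j) kk * vA kk = c * ((B j : ℝ) * (A i : ℝ)) := by
    intro c i j
    rw [ipA_eq, Finset.sum_eq_single i]
    · simp [hvij]; ring
    · intro i' _ hne; simp [hvij, hne]
    · intro h; exact absurd (Finset.mem_univ i) h
  have hipB_vij : ∀ (c : ℝ) (i : Fin s) (j : Fin r),
      ∑ kk, (c • vij i j) kk * vB kk = c * ((B j : ℝ) * (A i : ℝ)) := by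
    intro c i j
    rw [ipB_eq, Finset.sum_eq_single j]
    · simp [hvij]; ring
    · intro j' _ hne; simp [hvij, hne]
    · intro h; exact absurd (Finset.mem_univ j) h
  -- Part 1
  have hpart1 : ∀ v : Fin s ⊕ Fin r → ℝ, (∀ k, 0 ≤ v k) → v ≠ 0 →
      (Module.finrank ℝ (vectorSpan ℝ (face v)) = s + r - 1 ↔
        (∃ c : ℝ, 0 < c ∧ ∃ k, v = c • (Pi.single k 1 : Fin s ⊕ Fin r → ℝ)) ∨
        (∃ c : ℝ, 0 < c ∧ ∃ i j, v = c • vij i j)) := by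
    intro v hv hv0
    have hNe : {k | v k ≠ 0}.Nonempty := by
      rw [Function.ne_iff] at hv0
      obtain ⟨k, hk⟩ := hv0
      exact ⟨k, hk⟩
    have hcard : {k | v k = 0}.ncard + {k | v k ≠ 0}.ncard = s + r := by
      have h1 : {k | v k ≠ 0} = {k | v k = 0}ᶜ := by ext k; simp
      rw [h1, Set.ncard_add_ncard_compl, Nat.card_eq_fintype_card]
      simp
    have hNpos : 1 ≤ {k | v k ≠ 0}.ncard := by
      rw [Nat.one_le_iff_ne_zero]
      intro h0
      rw [Set.ncard_eq_zero (Set.toFinite _)] at h0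
      exact hNe.ne_empty h0
    have key : ((∑ k, v k * vA k) ≠ (∑ k, v k * vB k) ∧
          Module.finrank ℝ (vectorSpan ℝ (face v)) = {k | v k = 0}.ncard) ∨
        ((∑ k, v k * vA k) = (∑ k, v k * vB k) ∧
          Module.finrank ℝ (vectorSpan ℝ (face v)) = {k | v k = 0}.ncard + 1) := by
      rcases lt_trichotomy (∑ k, v k * vA k) (∑ k, v k * vB k) with hlt | heqc | hgt
      · refine Or.inl ⟨ne_of_lt hlt, ?_⟩
        rw [face_case v hv vA vB memP_iff hlt (min_eq_left hlt.le),
          Stmt10Aux.vectorSpan_translate_cone, Stmt10Aux.finrank_span_singles]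
      · refine Or.inr ⟨heqc, ?_⟩
        obtain ⟨k0, hk0⟩ := hNe
        have hnm : vA - vB ∉ Submodule.span ℝ (Stmt10Aux.singles {k | v k = 0}) := by
          refine Stmt10Aux.not_mem_span_singles (x := vA - vB) (k0 := k0) hk0 ?_
          rcases k0 with i | j
          · rw [hvA, hvB]
            simp only [Pi.sub_apply, Sum.elim_inl, Pi.zero_apply, sub_zero]
            exact_mod_cast (hA i).ne'
          · rw [hvA, hvB]
            simp only [Pi.sub_apply, Sum.elim_inr, Pi.zero_apply, zero_sub, ne_eq,
              neg_eq_zero]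
            exact_mod_cast (hB j).ne'
        rw [face_eq v hv heqc, Stmt10Aux.vectorSpan_segment_cone,
          Stmt10Aux.finrank_span_insert_singles _ _ hnm]
      · refine Or.inl ⟨ne_of_gt hgt, ?_⟩
        rw [face_case v hv vB vA memP_iff' hgt (min_eq_right hgt.le),
          Stmt10Aux.vectorSpan_translate_cone, Stmt10Aux.finrank_span_singles]
    rcases key with ⟨habne, hrank⟩ | ⟨habeq, hrank⟩
    · rw [hrank]
      constructor
      · intro hZ
        left
        have hN1 : {k | v k ≠ 0}.ncard = 1 := by omega
        obtain ⟨k, hk⟩ := Set.ncard_eq_one.mp hN1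
        have hkmem : v k ≠ 0 := by
          have : k ∈ {k' | v k' ≠ 0} := by rw [hk]; exact rfl
          exact this
        refine ⟨v k, lt_of_le_of_ne (hv k) (Ne.symm hkmem), k, ?_⟩
        funext k'
        by_cases h : k' = k
        · subst h; simp
        · have hz : v k' = 0 := by
            by_contra hc
            have : k' ∈ {k'' | v k'' ≠ 0} := hc
            rw [hk] at this
            exact h this
          simp [Pi.single_apply, h, hz]
      · rintro (⟨c, hc, k, hk⟩ | ⟨c, hc, i, j, hk⟩)
        · have hN : {k' | v k' ≠ 0} = {k} := by
            ext k'
            simp only [Set.mem_setOf_eq, Set.mem_singleton_iff, hk]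
            by_cases h : k' = k
            · simp [h, hc.ne']
            · simp [Pi.single_apply, h]
          rw [hN, Set.ncard_singleton] at hcard
          omega
        · exfalso
          rw [hk] at habne
          rw [hipA_vij, hipB_vij] at habne
          exact habne rfl
    · rw [hrank]
      constructor
      · intro hZ
        have hN2 : {k | v k ≠ 0}.ncard = 2 := by omega
        obtain ⟨k1, k2, hk12, hN⟩ := Set.ncard_eq_two.mp hN2
        have build : ∀ (i : Fin s) (j : Fin r), {k | v k ≠ 0} = {Sum.inl i, Sum.inr j} →
            (∃ c : ℝ, 0 < c ∧ ∃ i' j', v = c • vij i' j') := by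
          intro i j hN'
          have hvi : v (Sum.inl i) ≠ 0 := by
            have : Sum.inl i ∈ {k | v k ≠ 0} := by rw [hN']; exact Set.mem_insert _ _
            exact this
          have hvj : v (Sum.inr j) ≠ 0 := by
            have : Sum.inr j ∈ {k | v k ≠ 0} := by
              rw [hN']; exact Set.mem_insert_iff.mpr (Or.inr rfl)
            exact this
          have hzero : ∀ kk, kk ≠ Sum.inl i → kk ≠ Sum.inr j → v kk = 0 := by
            intro kk h1 h2
            by_contra hc
            have : kk ∈ {k | v k ≠ 0} := hc
            rw [hN'] at this
            rcases this with h | h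
            · exact h1 h
            · exact h2 h
          have haA : (∑ kk, v kk * vA kk) = v (Sum.inl i) * (A i : ℝ) := by
            rw [ipA_eq, Finset.sum_eq_single i]
            · intro i' _ hne
              rw [hzero (Sum.inl i') (by simp [hne]) (by simp), zero_mul]
            · intro h; exact absurd (Finset.mem_univ i) h
          have haB : (∑ kk, v kk * vB kk) = v (Sum.inr j) * (B j : ℝ) := by
            rw [ipB_eq, Finset.sum_eq_single j]
            · intro j' _ hne
              rw [hzero (Sum.inr j') (by simp) (by simp [hne]), zero_mul]
            · intro h; exact absurd (Finset.mem_univ j) h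
          have heqAB : v (Sum.inl i) * (A i : ℝ) = v (Sum.inr j) * (B j : ℝ) := by
            rw [← haA, ← haB]; exact habeq
          have hBj : (0:ℝ) < (B j : ℝ) := by exact_mod_cast hB j
          have hAi : (0:ℝ) < (A i : ℝ) := by exact_mod_cast hA i
          have hvi' : 0 < v (Sum.inl i) := lt_of_le_of_ne (hv _) (Ne.symm hvi)
          refine ⟨v (Sum.inl i) / (B j : ℝ), div_pos hvi' hBj, i, j, ?_⟩
          funext kk
          rcases kk with i' | j'
          · by_cases h' : i' = i
            · subst h'
              simp only [Pi.smul_apply, hvij, Sum.elim_inl, if_pos rfl, ↓reduceIte, smul_eq_mul]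
              field_simp
            · rw [hzero (Sum.inl i') (by simp [h']) (by simp)]
              simp [hvij, h']
          · by_cases h' : j' = j
            · subst h'
              simp only [Pi.smul_apply, hvij, Sum.elim_inr, smul_eq_mul]
              rw [if_pos trivial, div_mul_eq_mul_div, eq_div_iff hBj.ne']
              linear_combination -heqAB
            · rw [hzero (Sum.inr j') (by simp) (by simp [h'])]
              simp [hvij, h']
        have hposA : ∀ i : Fin s, v (Sum.inl i) ≠ 0 → 0 < ∑ k, v k * vA k := by
          intro i hvi
          rw [ipA_eq]
          refine Finset.sum_pos' (fun i' _ => mul_nonneg (hv _) (by positivity)) ⟨i,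
            Finset.mem_univ i, ?_⟩
          have : 0 < v (Sum.inl i) := lt_of_le_of_ne (hv _) (Ne.symm hvi)
          have hAi : (0:ℝ) < (A i : ℝ) := by exact_mod_cast hA i
          positivity
        have hposB : ∀ j : Fin r, v (Sum.inr j) ≠ 0 → 0 < ∑ k, v k * vB k := by
          intro j hvj
          rw [ipB_eq]
          refine Finset.sum_pos' (fun j' _ => mul_nonneg (hv _) (by positivity)) ⟨j,
            Finset.mem_univ j, ?_⟩
          have : 0 < v (Sum.inr j) := lt_of_le_of_ne (hv _) (Ne.symm hvj)
          have hBj : (0:ℝ) < (B j : ℝ) := by exact_mod_cast hB j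
          positivity
        have hzeroA : (∀ i : Fin s, Sum.inl i ∉ {k | v k ≠ 0}) → (∑ k, v k * vA k) = 0 := by
          intro h
          rw [ipA_eq]
          refine Finset.sum_eq_zero fun i _ => ?_
          have : v (Sum.inl i) = 0 := not_not.mp (h i)
          rw [this, zero_mul]
        have hzeroB : (∀ j : Fin r, Sum.inr j ∉ {k | v k ≠ 0}) → (∑ k, v k * vB k) = 0 := by
          intro h
          rw [ipB_eq]
          refine Finset.sum_eq_zero fun j _ => ?_
          have : v (Sum.inr j) = 0 := not_not.mp (h j)
          rw [this, zero_mul]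
        right
        rcases k1 with i1 | j1 <;> rcases k2 with i2 | j2
        · exfalso
          have hBz : (∑ k, v k * vB k) = 0 := by
            refine hzeroB fun j hj => ?_
            rw [hN] at hj
            rcases hj with h | h <;> simp at h
          have hAz : 0 < ∑ k, v k * vA k := by
            refine hposA i1 ?_
            have : Sum.inl i1 ∈ {k | v k ≠ 0} := by rw [hN]; exact Set.mem_insert _ _
            exact this
          rw [habeq, hBz] at hAz
          exact lt_irrefl 0 hAz
        · exact build i1 j2 hN
        · exact build i2 j1 (by rw [hN, Set.pair_comm])
        · exfalso
          have hAz : (∑ k, v k * vA k) = 0 := by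
            refine hzeroA fun i hi => ?_
            rw [hN] at hi
            rcases hi with h | h <;> simp at h
          have hBz : 0 < ∑ k, v k * vB k := by
            refine hposB j1 ?_
            have : Sum.inr j1 ∈ {k | v k ≠ 0} := by rw [hN]; exact Set.mem_insert _ _
            exact this
          rw [← habeq, hAz] at hBz
          exact lt_irrefl 0 hBz
      · rintro (⟨c, hc, k, hk⟩ | ⟨c, hc, i, j, hk⟩)
        · exfalso
          rw [hk, ip_single', ip_single'] at habeq
          rcases k with i | j
          · rw [hvA, hvB] at habeq
            simp only [Sum.elim_inl, Pi.zero_apply, mul_zero] at habeq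
            have hAi : (0:ℝ) < (A i : ℝ) := by exact_mod_cast hA i
            nlinarith
          · rw [hvA, hvB] at habeq
            simp only [Sum.elim_inr, Pi.zero_apply, mul_zero] at habeq
            have hBj : (0:ℝ) < (B j : ℝ) := by exact_mod_cast hB j
            nlinarith
        · have hN : {k' | v k' ≠ 0} = {Sum.inl i, Sum.inr j} := by
            ext kk
            simp only [Set.mem_setOf_eq, Set.mem_insert_iff, Set.mem_singleton_iff, hk]
            have hBj : (B j : ℝ) ≠ 0 := by exact_mod_cast (hB j).ne'
            have hAi : (A i : ℝ) ≠ 0 := by exact_mod_cast (hA i).ne'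
            rcases kk with i' | j'
            · by_cases h' : i' = i <;>
                simp [hvij, h', hc.ne', hBj]
            · by_cases h' : j' = j <;>
                simp [hvij, h', hc.ne', hAi]
          have h2 : {k' | v k' ≠ 0}.ncard = 2 := by
            rw [hN]
            exact Set.ncard_pair (by simp)
          omega
  refine ⟨hpart1, ?_⟩
  -- Part 2
  intro _hpair
  have face_scale : ∀ (v : Fin s ⊕ Fin r → ℝ) (c : ℝ), 0 < c → face (c • v) = face v := by
    intro v c hc
    rw [hface, hface]
    have hs' : ∀ w : Fin s ⊕ Fin r → ℝ, ∑ k, (c • v) k * w k = c * ∑ k, v k * w k := by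
      intro w
      rw [Finset.mul_sum]
      exact Finset.sum_congr rfl fun k _ => by simp only [Pi.smul_apply, smul_eq_mul]; ring
    ext w
    simp only [Set.mem_setOf_eq, hs']
    constructor
    · rintro ⟨h1, h2⟩
      exact ⟨h1, fun u hu => le_of_mul_le_mul_left (h2 u hu) hc⟩
    · rintro ⟨h1, h2⟩
      exact ⟨h1, fun u hu => mul_le_mul_of_nonneg_left (h2 u hu) hc.le⟩
  have single_nonneg : ∀ k kk, (0:ℝ) ≤ (Pi.single k 1 : Fin s ⊕ Fin r → ℝ) kk := by
    intro k kk
    rw [Pi.single_apply]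
    split <;> norm_num
  have single_ne : ∀ k, (Pi.single k 1 : Fin s ⊕ Fin r → ℝ) ≠ 0 := by
    intro k h
    have := congrFun h k
    simp at this
  have vij_nonneg : ∀ i j kk, 0 ≤ vij i j kk := by
    intro i j kk
    rw [hvij]
    rcases kk with i' | j'
    · simp only [Sum.elim_inl]; split
      · positivity
      · exact le_refl 0
    · simp only [Sum.elim_inr]; split
      · positivity
      · exact le_refl 0
  have vij_ne : ∀ i j, vij i j ≠ 0 := by
    intro i j h
    have := congrFun h (Sum.inl i)
    rw [hvij] at this
    simp only [Sum.elim_inl, if_pos rfl, Pi.zero_apply] at this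
    exact (hB j).ne' (by exact_mod_cast this)
  have hrank_single : ∀ k,
      Module.finrank ℝ (vectorSpan ℝ (face (Pi.single k 1 : Fin s ⊕ Fin r → ℝ)))
        = s + r - 1 :=
    fun k => (hpart1 _ (single_nonneg k) (single_ne k)).mpr
      (Or.inl ⟨1, one_pos, k, (one_smul ℝ _).symm⟩)
  have hrank_vij : ∀ i j,
      Module.finrank ℝ (vectorSpan ℝ (face (vij i j))) = s + r - 1 :=
    fun i j => (hpart1 _ (vij_nonneg i j) (vij_ne i j)).mpr
      (Or.inr ⟨1, one_pos, i, j, (one_smul ℝ _).symm⟩)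
  -- support recovery from faces
  have hface_supp : ∀ v v' : Fin s ⊕ Fin r → ℝ, (∀ k, 0 ≤ v k) → (∀ k, 0 ≤ v' k) →
      face v = face v' → ∀ k, v k = 0 → v' k = 0 := by
    intro v v' hv hv' hfeq k hk
    have hne : (face v).Nonempty := by
      rcases le_total (∑ kk, v kk * vA kk) (∑ kk, v kk * vB kk) with h | h
      · exact ⟨vA, (mem_face v hv vA).mpr ⟨hvAP, (min_eq_left h).symm⟩⟩
      · exact ⟨vB, (mem_face v hv vB).mpr ⟨hvBP, (min_eq_right h).symm⟩⟩
    obtain ⟨w, hw⟩ := hne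
    have hw2 := hw
    rw [hface] at hw2
    obtain ⟨hwP, hwmin⟩ := hw2
    have hwk : w + Pi.single k 1 ∈ face v := by
      rw [hface]
      constructor
      · rw [memP_iff] at hwP ⊢
        obtain ⟨a, b, ha, hb, hab, t, ht, rfl⟩ := hwP
        exact ⟨a, b, ha, hb, hab, t + Pi.single k 1,
          fun kk => add_nonneg (ht kk) (single_nonneg k kk), by abel⟩
      · intro u hu
        have hval : ∑ kk, v kk * (w + (Pi.single k 1 : Fin s ⊕ Fin r → ℝ)) kk = ∑ kk, v kk * w kk := by
          rw [ip_add, ip_single, hk]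
          ring
        rw [hval]
        exact hwmin u hu
    rw [hfeq, hface] at hwk
    rw [hfeq, hface] at hw
    obtain ⟨hwkP, hwkmin⟩ := hwk
    have h1 := hwkmin w hw.1
    rw [ip_add, ip_single] at h1
    have : v' k ≤ 0 := by nlinarith
    exact le_antisymm this (hv' k)
  set g : (Fin s ⊕ Fin r) ⊕ (Fin s × Fin r) → Set (Fin s ⊕ Fin r → ℝ) :=
    Sum.elim (fun k => face (Pi.single k 1)) (fun ij => face (vij ij.1 ij.2)) with hg
  have hginj : Function.Injective g := by
    intro x y hxy
    rcases x with k | ⟨i, j⟩ <;> rcases y with k' | ⟨i', j'⟩ <;>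
      simp only [hg, Sum.elim_inl, Sum.elim_inr] at hxy
    · suffices h : k = k' by rw [h]
      by_contra hne
      have h0 := hface_supp _ _ (single_nonneg k) (single_nonneg k') hxy k'
        (by simp [Pi.single_apply, Ne.symm hne])
      simp at h0
    · exfalso
      by_cases hki : k = Sum.inl i'
      · have h0 := hface_supp _ _ (single_nonneg k) (vij_nonneg i' j') hxy (Sum.inr j')
          (by simp [Pi.single_apply, hki])
        rw [hvij] at h0
        simp only [Sum.elim_inr, if_pos rfl] at h0
        exact (hA i').ne' (by exact_mod_cast h0)
      · have h0 := hface_supp _ _ (single_nonneg k) (vij_nonneg i' j') hxy (Sum.inl i')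
          (by simp [Pi.single_apply, Ne.symm hki])
        rw [hvij] at h0
        simp only [Sum.elim_inl, if_pos rfl] at h0
        exact (hB j').ne' (by exact_mod_cast h0)
    · exfalso
      by_cases hki : k' = Sum.inl i
      · have h0 := hface_supp _ _ (single_nonneg k') (vij_nonneg i j) hxy.symm (Sum.inr j)
          (by simp [Pi.single_apply, hki])
        rw [hvij] at h0
        simp only [Sum.elim_inr, if_pos rfl] at h0
        exact (hA i).ne' (by exact_mod_cast h0)
      · have h0 := hface_supp _ _ (single_nonneg k') (vij_nonneg i j) hxy.symm (Sum.inl i)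
          (by simp [Pi.single_apply, Ne.symm hki])
        rw [hvij] at h0
        simp only [Sum.elim_inl, if_pos rfl] at h0
        exact (hB j).ne' (by exact_mod_cast h0)
    · have hi : i = i' := by
        by_contra hne
        have h0 := hface_supp _ _ (vij_nonneg i' j') (vij_nonneg i j) hxy.symm (Sum.inl i)
          (by rw [hvij]; simp [hne])
        rw [hvij] at h0
        simp only [Sum.elim_inl, if_pos rfl] at h0
        exact (hB j).ne' (by exact_mod_cast h0)
      have hj : j = j' := by
        by_contra hne
        have h0 := hface_supp _ _ (vij_nonneg i' j') (vij_nonneg i j) hxy.symm (Sum.inr j)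
          (by rw [hvij]; simp [hne])
        rw [hvij] at h0
        simp only [Sum.elim_inr, if_pos rfl] at h0
        exact (hA i).ne' (by exact_mod_cast h0)
      rw [hi, hj]
  have hSeq : {F : Set (Fin s ⊕ Fin r → ℝ) | ∃ v : Fin s ⊕ Fin r → ℝ, (∀ k, 0 ≤ v k) ∧
      v ≠ 0 ∧ Module.finrank ℝ (vectorSpan ℝ (face v)) = s + r - 1 ∧
      F = face v} = Set.range g := by
    ext F
    simp only [Set.mem_setOf_eq, Set.mem_range]
    constructor
    · rintro ⟨v, hv, hv0, hrank, rfl⟩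
      rcases (hpart1 v hv hv0).mp hrank with ⟨c, hc, k, hk⟩ | ⟨c, hc, i, j, hk⟩
      · refine ⟨Sum.inl k, ?_⟩
        simp only [hg, Sum.elim_inl]
        rw [hk]
        exact (face_scale _ c hc).symm
      · refine ⟨Sum.inr (i, j), ?_⟩
        simp only [hg, Sum.elim_inr]
        rw [hk]
        exact (face_scale _ c hc).symm
    · rintro ⟨x, rfl⟩
      rcases x with k | ⟨i, j⟩
      · exact ⟨Pi.single k 1, single_nonneg k, single_ne k, hrank_single k, by
          simp only [hg, Sum.elim_inl]⟩
      · exact ⟨vij i j, vij_nonneg i j, vij_ne i j, hrank_vij i j, by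
          simp only [hg, Sum.elim_inr]⟩
  rw [hSeq, ← Nat.card_coe_set_eq, Nat.card_range_of_injective hginj,
    Nat.card_eq_fintype_card]
  simp
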